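/- Let d ≥ 2, let μ be the uniform probability measure on the unit sphere of the Euclidean space ℝ^d, let n ∈ ℕ, let ω : Fin n → Fin n → ℝ be a symmetric weight function, and let v : Fin n → ℝ^d with ‖v i‖ = 1 for all i. For r on the unit sphere, define the rounded assignment z_r : Fin n → ℝ by z_r i = 1 if ⟨r, v i⟩ ≥ 0 and z_r i = −1 otherwise. Then the expectation over r (with respect to μ) of Cut(z_r) equals (1/π)·∑_{i<j} ω i j · arccos(⟨v i, v j⟩). -/

import Mathlib

open MeasureTheory Metric Finset
open scoped RealInnerProductSpace

/-- The cut value of a `{-1,1}`-valued assignment `z` for symmetric weights `ω`. -/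
noncomputable def cutVal (n : ℕ) (ω : Fin n → Fin n → ℝ) (z : Fin n → ℝ) : ℝ :=
  (1 / 2) * ∑ i : Fin n, ∑ j : Fin n, if i < j then ω i j * (1 - z i * z j) else 0

lemma sph_mem {d : ℕ} (f : EuclideanSpace ℝ (Fin d) ≃ₗᵢ[ℝ] EuclideanSpace ℝ (Fin d))
    (x : sphere (0 : EuclideanSpace ℝ (Fin d)) 1) :
    f x ∈ sphere (0 : EuclideanSpace ℝ (Fin d)) 1 := by
  rw [mem_sphere_zero_iff_norm, f.norm_map]; exact mem_sphere_zero_iff_norm.mp x.2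

variable {d : ℕ}

noncomputable def sphMap (f : EuclideanSpace ℝ (Fin d) ≃ₗᵢ[ℝ] EuclideanSpace ℝ (Fin d)) :
    sphere (0 : EuclideanSpace ℝ (Fin d)) 1 → sphere (0 : EuclideanSpace ℝ (Fin d)) 1 :=
  fun x => ⟨f x, sph_mem f x⟩

lemma sphMap_continuous (f : EuclideanSpace ℝ (Fin d) ≃ₗᵢ[ℝ] EuclideanSpace ℝ (Fin d)) :
    Continuous (sphMap f) :=
  Continuous.subtype_mk (f.continuous.comp continuous_subtype_val) _

lemma meas_inv (μ : Measure (sphere (0 : EuclideanSpace ℝ (Fin d)) 1))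
    (hinv : ∀ f : EuclideanSpace ℝ (Fin d) ≃ₗᵢ[ℝ] EuclideanSpace ℝ (Fin d),
      Measure.map
        (fun x : sphere (0 : EuclideanSpace ℝ (Fin d)) 1 =>
          (⟨f x, sph_mem f x⟩ :
              sphere (0 : EuclideanSpace ℝ (Fin d)) 1)) μ = μ)
    (f : EuclideanSpace ℝ (Fin d) ≃ₗᵢ[ℝ] EuclideanSpace ℝ (Fin d))
    {A : Set (sphere (0 : EuclideanSpace ℝ (Fin d)) 1)} (hA : MeasurableSet A) :
    μ (sphMap f ⁻¹' A) = μ A := by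
  conv_rhs => rw [← hinv f]
  exact (Measure.map_apply ((sphMap_continuous f).measurable) hA).symm

lemma exists_onb_extension {k : ℕ} (hk : k ≤ d) (w : Fin k → EuclideanSpace ℝ (Fin d))
    (hw : Orthonormal ℝ w) :
    ∃ b : OrthonormalBasis (Fin d) ℝ (EuclideanSpace ℝ (Fin d)),
      ∀ i : Fin k, b (Fin.castLE hk i) = w i := by
  have card : Module.finrank ℝ (EuclideanSpace ℝ (Fin d)) = Fintype.card (Fin d) := by
    simp [finrank_euclideanSpace_fin]
  set s : Set (Fin d) := {j | (j : ℕ) < k} with hs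
  set V : Fin d → EuclideanSpace ℝ (Fin d) :=
    fun j => if h : (j : ℕ) < k then w ⟨j, h⟩ else 0 with hV
  have hres : Orthonormal ℝ (s.restrict V) := by
    rw [orthonormal_iff_ite]
    rintro ⟨i, hi⟩ ⟨j, hj⟩
    have hi' : (i : ℕ) < k := hi
    have hj' : (j : ℕ) < k := hj
    have := (orthonormal_iff_ite.mp hw) ⟨i, hi'⟩ ⟨j, hj'⟩
    simp only [Set.restrict_apply, hV, dif_pos hi', dif_pos hj']
    show ⟪(if h : (i : ℕ) < k then w ⟨i, h⟩ else 0), (if h : (j : ℕ) < k then w ⟨j, h⟩ else 0)⟫ = _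
    rw [dif_pos hi', dif_pos hj']
    rw [this]
    congr 1
    simp [Fin.ext_iff, Subtype.ext_iff]
  obtain ⟨b, hb⟩ := hres.exists_orthonormalBasis_extension_of_card_eq card
  refine ⟨b, fun i => ?_⟩
  have : ((Fin.castLE hk i : Fin d) : ℕ) < k := by simp [i.isLt]
  rw [hb _ this]
  simp [hV, dif_pos this]

lemma exists_isometry_map_tuple {k : ℕ} (w w' : Fin k → EuclideanSpace ℝ (Fin d))
    (hw : Orthonormal ℝ w) (hw' : Orthonormal ℝ w') :
    ∃ f : (EuclideanSpace ℝ (Fin d)) ≃ₗᵢ[ℝ] EuclideanSpace ℝ (Fin d), ∀ i, f (w i) = w' i := by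
  have hk : k ≤ d := by
    have := hw.linearIndependent.fintype_card_le_finrank
    simpa [finrank_euclideanSpace_fin] using this
  obtain ⟨b, hb⟩ := exists_onb_extension hk w hw
  obtain ⟨b', hb'⟩ := exists_onb_extension hk w' hw'
  refine ⟨b.repr.trans b'.repr.symm, fun i => ?_⟩
  have : b.repr (w i) = EuclideanSpace.single (Fin.castLE hk i) 1 := by
    rw [← hb i]; exact b.repr_self _
  simp [LinearIsometryEquiv.trans_apply, this, OrthonormalBasis.repr_symm_single, hb' i]

def Zset {k : ℕ} (w : Fin k → EuclideanSpace ℝ (Fin d)) :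
    Set (sphere (0 : EuclideanSpace ℝ (Fin d)) 1) :=
  {r | ∀ i, ⟪(r : EuclideanSpace ℝ (Fin d)), w i⟫ = 0}

lemma Zset_meas {k : ℕ} (w : Fin k → EuclideanSpace ℝ (Fin d)) :
    MeasurableSet (Zset w) := by
  have : Zset w = ⋂ i, {r : sphere (0 : EuclideanSpace ℝ (Fin d)) 1 |
      ⟪(r : EuclideanSpace ℝ (Fin d)), w i⟫ = 0} := by
    ext r; simp [Zset, Set.mem_iInter]
  rw [this]
  exact MeasurableSet.iInter fun i =>
    (isClosed_eq (continuous_subtype_val.inner continuous_const) continuous_const).measurableSet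

lemma Zset_empty {k : ℕ} (hk1 : 1 ≤ k) (hdk : d ≤ k) (w : Fin k → EuclideanSpace ℝ (Fin d))
    (hw : Orthonormal ℝ w) : Zset w = ∅ := by
  haveI : Nonempty (Fin k) := ⟨⟨0, hk1⟩⟩
  have hspan : Submodule.span ℝ (Set.range w) = ⊤ :=
    hw.linearIndependent.span_eq_top_of_card_eq_finrank
      (by
        have hkd : k ≤ d := by
          have := hw.linearIndependent.fintype_card_le_finrank
          simpa [finrank_euclideanSpace_fin] using this
        simp [finrank_euclideanSpace_fin]; omega)
  ext r
  simp only [Set.mem_empty_iff_false, iff_false, Zset, Set.mem_setOf_eq]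
  intro hr
  have hmem : (r : EuclideanSpace ℝ (Fin d)) ∈ (⊤ : Submodule ℝ (EuclideanSpace ℝ (Fin d)))ᗮ := by
    rw [← hspan, Submodule.mem_orthogonal]
    intro u hu
    induction hu using Submodule.span_induction with
    | mem x hx => obtain ⟨i, rfl⟩ := hx; rw [real_inner_comm]; exact hr i
    | zero => simp
    | add x y _ _ hx hy => rw [inner_add_left, hx, hy]; ring
    | smul a x _ hx => rw [inner_smul_left, hx]; simp
  rw [Submodule.top_orthogonal_eq_bot, Submodule.mem_bot] at hmem
  have h1 : ‖(r : EuclideanSpace ℝ (Fin d))‖ = 1 := by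
    have := r.2; rwa [mem_sphere_zero_iff_norm] at this
  rw [hmem] at h1
  simp at h1

lemma null_Z (μ : Measure (sphere (0 : EuclideanSpace ℝ (Fin d)) 1)) [IsProbabilityMeasure μ]
    (hinv : ∀ f : EuclideanSpace ℝ (Fin d) ≃ₗᵢ[ℝ] EuclideanSpace ℝ (Fin d),
      Measure.map
        (fun x : sphere (0 : EuclideanSpace ℝ (Fin d)) 1 =>
          (⟨f x, sph_mem f x⟩ :
              sphere (0 : EuclideanSpace ℝ (Fin d)) 1)) μ = μ)
    {k : ℕ} (hk1 : 1 ≤ k) (w : Fin k → EuclideanSpace ℝ (Fin d)) (hw : Orthonormal ℝ w) :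
    μ (Zset w) = 0 := by
  suffices H : ∀ m k, d - k = m → 1 ≤ k → ∀ w : Fin k → EuclideanSpace ℝ (Fin d),
      Orthonormal ℝ w → μ (Zset w) = 0 from H (d - k) k rfl hk1 w hw
  intro m
  induction m with
  | zero =>
    intro k hm hk1 w hw
    rw [Zset_empty hk1 (by omega) w hw]
    simp
  | succ m IH =>
    intro k hm hk1 w hw
    have hkd : k < d := by omega
    obtain ⟨b, hb⟩ := exists_onb_extension (le_of_lt hkd) w hw
    set e : EuclideanSpace ℝ (Fin d) := b ⟨k, hkd⟩ with he
    have hkd1 : k + 1 ≤ d := hkd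
    set W1 : Fin (k+1) → EuclideanSpace ℝ (Fin d) := b ∘ Fin.castLE hkd1 with hW1
    have hW1on : Orthonormal ℝ W1 :=
      b.orthonormal.comp _ (Fin.castLE_injective hkd1)
    have hW1w : ∀ i : Fin k, W1 (Fin.castSucc i) = w i := by
      intro i
      have hcast : Fin.castLE hkd1 (Fin.castSucc i) = Fin.castLE (le_of_lt hkd) i := by
        ext; simp
      simp only [hW1, Function.comp_apply, hcast, hb i]
    have hW1e : W1 (Fin.last k) = e := by
      simp only [hW1, Function.comp_apply, he]
      congr 1
    have hZW1 : μ (Zset W1) = 0 := IH (k+1) (by omega) (by omega) W1 hW1on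
    have hbo := orthonormal_iff_ite.mp b.orthonormal
    have hee : ⟪e, e⟫ = 1 := by
      have := hbo ⟨k, hkd⟩ ⟨k, hkd⟩; rw [if_pos rfl] at this; exact this
    have hwe : ∀ i : Fin k, ⟪w i, e⟫ = 0 := by
      intro i
      have := hbo (Fin.castLE (le_of_lt hkd) i) ⟨k, hkd⟩
      rw [hb i] at this
      simpa [Fin.ext_iff, (Nat.ne_of_lt i.isLt : (i : ℕ) ≠ k)] using this
    have hew : ∀ i : Fin k, ⟪e, w i⟫ = 0 := fun i => by rw [real_inner_comm]; exact hwe i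
    have hww := orthonormal_iff_ite.mp hw
    set i0 : Fin k := ⟨0, hk1⟩ with hi0
    set W : ℝ → Fin k → EuclideanSpace ℝ (Fin d) := fun α =>
      Function.update w i0 (Real.cos α • w i0 + Real.sin α • e) with hWdef
    have hWat : ∀ α, W α i0 = Real.cos α • w i0 + Real.sin α • e := by
      intro α; simp [hWdef]
    have hWne : ∀ (α) (i : Fin k), i ≠ i0 → W α i = w i := by
      intro α i h; simp [hWdef, Function.update_of_ne h]
    have h00 : ⟪w i0, w i0⟫ = 1 := by simpa using hww i0 i0
    have hWon : ∀ α, Orthonormal ℝ (W α) := by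
      intro α
      rw [orthonormal_iff_ite]
      intro i j
      rcases eq_or_ne i i0 with rfl | hi
      · rcases eq_or_ne j i0 with rfl | hj
        · rw [if_pos rfl, hWat]
          simp only [inner_add_left, inner_add_right, real_inner_smul_left,
            real_inner_smul_right, h00, hee, hwe, hew]
          nlinarith [Real.sin_sq_add_cos_sq α]
        · rw [if_neg (fun h => hj h.symm), hWat, hWne α j hj]
          have h0j : ⟪w i0, w j⟫ = 0 := by
            have := hww i0 j; rwa [if_neg (fun h => hj h.symm)] at this
          rw [inner_add_left, real_inner_smul_left, real_inner_smul_left, h0j, hew j]; ring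
      · rcases eq_or_ne j i0 with rfl | hj
        · rw [if_neg hi, hWat, hWne α i hi]
          have hi0' : ⟪w i, w i0⟫ = 0 := by
            have := hww i i0; rwa [if_neg hi] at this
          rw [inner_add_right, real_inner_smul_right, real_inner_smul_right, hi0', hwe i]; ring
        · rw [hWne α i hi, hWne α j hj]; exact hww i j
    have hWmeas : ∀ α, μ (Zset (W α)) = μ (Zset w) := by
      intro α
      obtain ⟨g, hg⟩ := exists_isometry_map_tuple w (W α) hw (hWon α)
      have hkey : ∀ (r : sphere (0 : EuclideanSpace ℝ (Fin d)) 1) (i : Fin k),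
          ⟪(r : EuclideanSpace ℝ (Fin d)), W α i⟫
            = ⟪(g.symm (r : EuclideanSpace ℝ (Fin d)) : EuclideanSpace ℝ (Fin d)), w i⟫ := by
        intro r i
        rw [← hg i, ← LinearIsometryEquiv.inner_map_map g
          (g.symm (r : EuclideanSpace ℝ (Fin d))) (w i), g.apply_symm_apply]
      have hpre : Zset (W α) = sphMap g.symm ⁻¹' Zset w := by
        ext r
        simp only [Zset, Set.mem_setOf_eq, Set.mem_preimage, sphMap]
        constructor
        · intro h i; rw [← hkey r i]; exact h i
        · intro h i; rw [hkey r i]; exact h i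
      rw [hpre, meas_inv μ hinv g.symm (Zset_meas w)]
    have hpair : ∀ α β, Real.sin (β - α) ≠ 0 → Zset (W α) ∩ Zset (W β) ⊆ Zset W1 := by
      rintro α β hs r ⟨hra, hrb⟩
      have hxw : ∀ i, i ≠ i0 → ⟪(r : EuclideanSpace ℝ (Fin d)), w i⟫ = 0 := by
        intro i h
        have := hra i; rwa [hWne α i h] at this
      set x := ⟪(r : EuclideanSpace ℝ (Fin d)), w i0⟫ with hx
      set y := ⟪(r : EuclideanSpace ℝ (Fin d)), e⟫ with hy
      have e1 : Real.cos α * x + Real.sin α * y = 0 := by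
        have := hra i0
        rw [hWat α, inner_add_right, real_inner_smul_right, real_inner_smul_right] at this
        exact this
      have e2 : Real.cos β * x + Real.sin β * y = 0 := by
        have := hrb i0
        rw [hWat β, inner_add_right, real_inner_smul_right, real_inner_smul_right] at this
        exact this
      have hx0 : x = 0 := by
        have hxs : x * Real.sin (β - α) = 0 := by
          rw [Real.sin_sub]; linear_combination Real.sin β * e1 - Real.sin α * e2
        rcases mul_eq_zero.mp hxs with h | h
        · exact h
        · exact absurd h hs
      have hy0 : y = 0 := by
        have hys : y * Real.sin (β - α) = 0 := by
          rw [Real.sin_sub]; linear_combination (-(Real.cos β)) * e1 + Real.cos α * e2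
        rcases mul_eq_zero.mp hys with h | h
        · exact h
        · exact absurd h hs
      intro i
      refine Fin.lastCases ?_ ?_ i
      · rw [hW1e]; exact hy0
      · intro j
        rw [hW1w j]
        rcases eq_or_ne j i0 with rfl | h
        · exact hx0
        · exact hxw j h
    set a : ℕ → ℝ := fun j => Real.pi / (2 * (j + 1)) with ha
    have hapos : ∀ j, 0 < a j := fun j => by
      apply div_pos Real.pi_pos; positivity
    have hale : ∀ j, a j ≤ Real.pi / 2 := by
      intro j
      show Real.pi / (2 * ((j : ℝ) + 1)) ≤ Real.pi / 2
      gcongr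
      nlinarith [Nat.cast_nonneg (α := ℝ) j]
    have hainj : Function.Injective a := by
      intro i j hij
      have hi2 : (0 : ℝ) < 2 * ((i : ℝ) + 1) := by positivity
      have hj2 : (0 : ℝ) < 2 * ((j : ℝ) + 1) := by positivity
      have hdd := (div_eq_div_iff hi2.ne' hj2.ne').mp hij
      have hc := mul_left_cancel₀ Real.pi_ne_zero
        (by linarith : Real.pi * (2 * ((j : ℝ) + 1)) = Real.pi * (2 * ((i : ℝ) + 1)))
      have : (i : ℝ) = j := by linarith
      exact_mod_cast this
    have hsin : ∀ i j : ℕ, i ≠ j → Real.sin (a j - a i) ≠ 0 := by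
      intro i j hij
      intro h
      have h1 : -Real.pi < a j - a i := by
        have := hapos j; have := hale i; have := Real.pi_pos; linarith
      have h2 : a j - a i < Real.pi := by
        have := hapos i; have := hale j; have := Real.pi_pos; linarith
      rw [Real.sin_eq_zero_iff_of_lt_of_lt h1 h2] at h
      exact hij (hainj (by linarith : a i = a j))
    set A : ℕ → Set (sphere (0 : EuclideanSpace ℝ (Fin d)) 1) := fun j => Zset (W (a j)) with hA
    have hAdisj : Pairwise (Function.onFun (AEDisjoint μ) A) := by
      intro i j hij
      exact measure_mono_null (hpair (a i) (a j) (hsin i j hij)) hZW1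
    have hUnion := measure_iUnion₀ hAdisj (fun j => (Zset_meas _).nullMeasurableSet)
    by_contra hz
    have htop : ∑' _ : ℕ, μ (Zset w) = ⊤ := ENNReal.tsum_const_eq_top_of_ne_zero hz
    have : μ (⋃ j, A j) = ⊤ := by
      rw [hUnion]
      calc ∑' j, μ (A j) = ∑' _ : ℕ, μ (Zset w) := by
            congr 1; ext j; exact hWmeas (a j)
        _ = ⊤ := htop
    exact measure_ne_top μ _ this

def Dset (u v : EuclideanSpace ℝ (Fin d)) : Set (sphere (0 : EuclideanSpace ℝ (Fin d)) 1) :=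
  {r | ¬ ((0 ≤ ⟪(r : EuclideanSpace ℝ (Fin d)), u⟫) ↔ (0 ≤ ⟪(r : EuclideanSpace ℝ (Fin d)), v⟫))}

lemma Dset_meas (u v : EuclideanSpace ℝ (Fin d)) : MeasurableSet (Dset u v) := by
  have hA : ∀ u' : EuclideanSpace ℝ (Fin d), MeasurableSet
      {r : sphere (0 : EuclideanSpace ℝ (Fin d)) 1 | 0 ≤ ⟪(r : EuclideanSpace ℝ (Fin d)), u'⟫} :=
    fun u' => (isClosed_le continuous_const
      (continuous_subtype_val.inner continuous_const)).measurableSet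
  have : Dset u v =
      ({r : sphere (0 : EuclideanSpace ℝ (Fin d)) 1 | 0 ≤ ⟪(r : EuclideanSpace ℝ (Fin d)), u⟫} \
        {r | 0 ≤ ⟪(r : EuclideanSpace ℝ (Fin d)), v⟫}) ∪
      ({r | 0 ≤ ⟪(r : EuclideanSpace ℝ (Fin d)), v⟫} \
        {r | 0 ≤ ⟪(r : EuclideanSpace ℝ (Fin d)), u⟫}) := by
    ext r; simp only [Dset, Set.mem_setOf_eq, Set.mem_union, Set.mem_diff, Set.mem_setOf_eq]
    tauto
  rw [this]
  exact ((hA u).diff (hA v)).union ((hA v).diff (hA u))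

lemma orthonormal_one {u : EuclideanSpace ℝ (Fin d)} (hu : ‖u‖ = 1) :
    Orthonormal ℝ (fun _ : Fin 1 => u) := by
  rw [orthonormal_iff_ite]
  intro i j
  rw [if_pos (Subsingleton.elim i j)]
  rw [real_inner_self_eq_norm_mul_norm, hu]; norm_num

lemma null_H (μ : Measure (sphere (0 : EuclideanSpace ℝ (Fin d)) 1)) [IsProbabilityMeasure μ]
    (hinv : ∀ f : EuclideanSpace ℝ (Fin d) ≃ₗᵢ[ℝ] EuclideanSpace ℝ (Fin d),
      Measure.map
        (fun x : sphere (0 : EuclideanSpace ℝ (Fin d)) 1 =>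
          (⟨f x, sph_mem f x⟩ :
              sphere (0 : EuclideanSpace ℝ (Fin d)) 1)) μ = μ)
    {u : EuclideanSpace ℝ (Fin d)} (hu : ‖u‖ = 1) :
    μ {r : sphere (0 : EuclideanSpace ℝ (Fin d)) 1 |
        ⟪(r : EuclideanSpace ℝ (Fin d)), u⟫ = 0} = 0 := by
  have h := null_Z μ hinv le_rfl (fun _ : Fin 1 => u) (orthonormal_one hu)
  have : Zset (fun _ : Fin 1 => u) = {r : sphere (0 : EuclideanSpace ℝ (Fin d)) 1 |
      ⟪(r : EuclideanSpace ℝ (Fin d)), u⟫ = 0} := by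
    ext r; simp [Zset]
  rwa [this] at h

lemma Dset_inv (μ : Measure (sphere (0 : EuclideanSpace ℝ (Fin d)) 1))
    (hinv : ∀ f : EuclideanSpace ℝ (Fin d) ≃ₗᵢ[ℝ] EuclideanSpace ℝ (Fin d),
      Measure.map
        (fun x : sphere (0 : EuclideanSpace ℝ (Fin d)) 1 =>
          (⟨f x, sph_mem f x⟩ :
              sphere (0 : EuclideanSpace ℝ (Fin d)) 1)) μ = μ)
    (g : EuclideanSpace ℝ (Fin d) ≃ₗᵢ[ℝ] EuclideanSpace ℝ (Fin d))
    (u v : EuclideanSpace ℝ (Fin d)) :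
    μ (Dset (g u) (g v)) = μ (Dset u v) := by
  have hkey : ∀ (r : sphere (0 : EuclideanSpace ℝ (Fin d)) 1) (z : EuclideanSpace ℝ (Fin d)),
      ⟪(r : EuclideanSpace ℝ (Fin d)), g z⟫
        = ⟪(g.symm (r : EuclideanSpace ℝ (Fin d)) : EuclideanSpace ℝ (Fin d)), z⟫ := by
    intro r z
    rw [← LinearIsometryEquiv.inner_map_map g (g.symm (r : EuclideanSpace ℝ (Fin d))) z,
      g.apply_symm_apply]
  have hpre : Dset (g u) (g v) = sphMap g.symm ⁻¹' Dset u v := by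
    ext r
    simp only [Dset, Set.mem_setOf_eq, Set.mem_preimage, sphMap, hkey]
  rw [hpre, meas_inv μ hinv g.symm (Dset_meas u v)]

section Pair
variable (hd : 2 ≤ d)

noncomputable def epair (hd : 2 ≤ d) : Fin 2 → EuclideanSpace ℝ (Fin d) :=
  fun i => EuclideanSpace.basisFun (Fin d) ℝ ⟨(i : ℕ), lt_of_lt_of_le i.isLt hd⟩

lemma epair_on : Orthonormal ℝ (epair hd) :=
  (EuclideanSpace.basisFun (Fin d) ℝ).orthonormal.comp _
    (fun i j hij => by
      simp only [Fin.mk.injEq] at hij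
      exact Fin.ext hij)

noncomputable def uvec (hd : 2 ≤ d) (θ : ℝ) : EuclideanSpace ℝ (Fin d) :=
  Real.cos θ • epair hd 0 + Real.sin θ • epair hd 1

lemma inner_uvec (r : EuclideanSpace ℝ (Fin d)) (θ : ℝ) :
    ⟪r, uvec hd θ⟫ = Real.cos θ * ⟪r, epair hd 0⟫ + Real.sin θ * ⟪r, epair hd 1⟫ := by
  rw [uvec, inner_add_right, real_inner_smul_right, real_inner_smul_right]

lemma inner_uvec_uvec (a b : ℝ) : ⟪uvec hd a, uvec hd b⟫ = Real.cos (b - a) := by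
  have h := orthonormal_iff_ite.mp (epair_on hd)
  have h00 : ⟪epair hd 0, epair hd 0⟫ = 1 := by simpa using h 0 0
  have h11 : ⟪epair hd 1, epair hd 1⟫ = 1 := by simpa using h 1 1
  have h01 : ⟪epair hd 0, epair hd 1⟫ = 0 := by simpa using h 0 1
  have h10 : ⟪epair hd 1, epair hd 0⟫ = 0 := by simpa using h 1 0
  simp only [uvec, inner_add_left, inner_add_right, real_inner_smul_left,
    real_inner_smul_right, h00, h11, h01, h10, Real.cos_sub]
  ring

lemma norm_uvec (θ : ℝ) : ‖uvec hd θ‖ = 1 := by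
  have h := inner_uvec_uvec hd θ θ
  rw [sub_self, Real.cos_zero, real_inner_self_eq_norm_mul_norm] at h
  nlinarith [norm_nonneg (uvec hd θ)]

lemma uvec_zero : uvec hd 0 = epair hd 0 := by
  rw [uvec]; simp

lemma uvec_pi : uvec hd Real.pi = -epair hd 0 := by
  rw [uvec]; simp

end Pair

/-- Reduction of any unit pair to the canonical pair at angle `arccos ⟪u,w⟫`. -/
lemma Dset_canonical (μ : Measure (sphere (0 : EuclideanSpace ℝ (Fin d)) 1))
    (hinv : ∀ f : EuclideanSpace ℝ (Fin d) ≃ₗᵢ[ℝ] EuclideanSpace ℝ (Fin d),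
      Measure.map
        (fun x : sphere (0 : EuclideanSpace ℝ (Fin d)) 1 =>
          (⟨f x, sph_mem f x⟩ :
              sphere (0 : EuclideanSpace ℝ (Fin d)) 1)) μ = μ)
    (hd : 2 ≤ d) {u w : EuclideanSpace ℝ (Fin d)} (hu : ‖u‖ = 1) (hw : ‖w‖ = 1) :
    μ (Dset u w) = μ (Dset (epair hd 0) (uvec hd (Real.arccos ⟪u, w⟫))) := by
  set c : ℝ := ⟪u, w⟫ with hc
  have habs : |c| ≤ 1 := by
    have := abs_real_inner_le_norm u w
    rw [hu, hw] at this
    simpa using this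
  have hcos : Real.cos (Real.arccos c) = c :=
    Real.cos_arccos (abs_le.mp habs).1 (abs_le.mp habs).2
  have hsin : Real.sin (Real.arccos c) = Real.sqrt (1 - c ^ 2) := Real.sin_arccos c
  rcases lt_or_eq_of_le habs with hlt | heq
  · -- |c| < 1
    have h1c : 0 < 1 - c ^ 2 := by nlinarith [abs_nonneg c, sq_abs c]
    set s : ℝ := Real.sqrt (1 - c ^ 2) with hs
    have hspos : 0 < s := Real.sqrt_pos.mpr h1c
    have hssq : s ^ 2 = 1 - c ^ 2 := Real.sq_sqrt h1c.le
    set w' : EuclideanSpace ℝ (Fin d) := s⁻¹ • (w - c • u) with hw'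
    have huu : ⟪u, u⟫ = 1 := by rw [real_inner_self_eq_norm_mul_norm, hu]; norm_num
    have hww' : ⟪w, w⟫ = 1 := by rw [real_inner_self_eq_norm_mul_norm, hw]; norm_num
    have hwu : ⟪w, u⟫ = c := by rw [hc]; exact real_inner_comm u w
    have huw' : ⟪u, w'⟫ = 0 := by
      rw [hw', real_inner_smul_right, inner_sub_right, real_inner_smul_right, huu, ← hc]
      ring
    have hw'w' : ⟪w', w'⟫ = 1 := by
      rw [hw', real_inner_smul_left, real_inner_smul_right, inner_sub_left, inner_sub_right,
        inner_sub_right, real_inner_smul_left, real_inner_smul_left, real_inner_smul_right,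
        real_inner_smul_right, huu, hww', hwu, ← hc]
      field_simp
      nlinarith [hssq]
    have hw'u : ⟪w', u⟫ = 0 := by rw [real_inner_comm]; exact huw'
    have hpair : Orthonormal ℝ (fun i : Fin 2 => if i = 0 then u else w') := by
      rw [orthonormal_iff_ite]
      intro i j
      fin_cases i <;> fin_cases j
      · simpa using huu
      · simpa using huw'
      · simpa using hw'u
      · simpa using hw'w'
    obtain ⟨g, hg⟩ := exists_isometry_map_tuple _ (epair hd) hpair (epair_on hd)
    have hgu : g u = epair hd 0 := by simpa using hg 0
    have hgw' : g w' = epair hd 1 := by simpa using hg 1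
    have hwdec : w = c • u + s • w' := by
      rw [hw', smul_smul, mul_inv_cancel₀ hspos.ne', one_smul]
      abel
    have hgw : g w = uvec hd (Real.arccos c) := by
      rw [hwdec, map_add, _root_.map_smul, _root_.map_smul, hgu, hgw', uvec, hcos, hsin]
    rw [← hgu, ← hgw, Dset_inv μ hinv g u w]
  · -- |c| = 1
    rcases abs_eq (by norm_num : (0:ℝ) ≤ 1) |>.mp heq with h1 | hm1
    · -- c = 1 : w = u
      have hwu : w = u := ((inner_eq_one_iff_of_norm_eq_one hu hw).mp h1).symm
      have harc : Real.arccos c = 0 := by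
        rw [show c = 1 from h1]; exact Real.arccos_one
      rw [harc, uvec_zero, hwu]
      have hempty : ∀ z : EuclideanSpace ℝ (Fin d), Dset z z = ∅ := by
        intro z; ext r; simp [Dset]
      rw [hempty, hempty]
    · -- c = -1 : w = -u
      have hwu : w = -u := by
        have h1' : ⟪u, -w⟫ = 1 := by rw [inner_neg_right, ← hc, hm1]; ring
        have := (inner_eq_one_iff_of_norm_eq_one hu (by rw [norm_neg]; exact hw)).mp h1'
        simpa [neg_eq_iff_eq_neg] using this.symm
      have harc : Real.arccos c = Real.pi := by
        rw [show c = -1 from hm1]; exact Real.arccos_neg_one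
      rw [harc, uvec_pi, hwu]
      obtain ⟨g, hg⟩ := exists_isometry_map_tuple (fun _ : Fin 1 => u)
        (fun _ : Fin 1 => epair hd 0) (orthonormal_one hu)
        (orthonormal_one (by
          have h00 := orthonormal_iff_ite.mp (epair_on hd) 0 0
          rw [if_pos rfl, real_inner_self_eq_norm_mul_norm] at h00
          nlinarith [norm_nonneg (epair hd 0)]))
      have hgu : g u = epair hd 0 := hg 0
      have hgnu : g (-u) = -(epair hd 0) := by rw [map_neg, hgu]
      rw [← hgnu, ← hgu, Dset_inv μ hinv g u (-u)]

lemma sign_mul_neg {s t : ℝ} (hs : s ≠ 0) (ht : t ≠ 0) (h : ¬ (0 ≤ s ↔ 0 ≤ t)) : s * t < 0 := by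
  rcases hs.lt_or_gt with h1 | h1 <;> rcases ht.lt_or_gt with h2 | h2
  · exact absurd (iff_of_false (not_le.2 h1) (not_le.2 h2)) h
  · exact mul_neg_of_neg_of_pos h1 h2
  · exact mul_neg_of_pos_of_neg h1 h2
  · exact absurd (iff_of_true h1.le h2.le) h

lemma exists_zero_of_sign_change {g : ℝ → ℝ} (hg : Continuous g) {p q : ℝ} (hpq : p ≤ q)
    (h : g p * g q < 0) : ∃ t ∈ Set.Ioo p q, g t = 0 := by
  rcases mul_neg_iff.mp h with ⟨h1, h2⟩ | ⟨h1, h2⟩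
  · have := intermediate_value_Ioo' hpq hg.continuousOn (Set.mem_Ioo.mpr ⟨h2, h1⟩)
    obtain ⟨t, ht, hgt⟩ := this
    exact ⟨t, ht, hgt⟩
  · have := intermediate_value_Ioo hpq hg.continuousOn (Set.mem_Ioo.mpr ⟨h1, h2⟩)
    obtain ⟨t, ht, hgt⟩ := this
    exact ⟨t, ht, hgt⟩

lemma norm_one_of_inner_self {x : EuclideanSpace ℝ (Fin d)} (h : ⟪x, x⟫ = 1) : ‖x‖ = 1 := by
  rw [real_inner_self_eq_norm_mul_norm] at h
  nlinarith [norm_nonneg x]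

lemma epair_norm (hd : 2 ≤ d) (i : Fin 2) : ‖epair hd i‖ = 1 := by
  apply norm_one_of_inner_self
  have := orthonormal_iff_ite.mp (epair_on hd) i i
  rwa [if_pos rfl] at this

lemma Dset_inter_null (μ : Measure (sphere (0 : EuclideanSpace ℝ (Fin d)) 1))
    [IsProbabilityMeasure μ]
    (hinv : ∀ f : EuclideanSpace ℝ (Fin d) ≃ₗᵢ[ℝ] EuclideanSpace ℝ (Fin d),
      Measure.map
        (fun x : sphere (0 : EuclideanSpace ℝ (Fin d)) 1 =>
          (⟨f x, sph_mem f x⟩ :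
              sphere (0 : EuclideanSpace ℝ (Fin d)) 1)) μ = μ)
    (hd : 2 ≤ d) {a b : ℝ} (ha : 0 ≤ a) (hb : 0 ≤ b) (hab : a + b ≤ Real.pi) :
    μ (Dset (epair hd 0) (uvec hd a) ∩ Dset (uvec hd a) (uvec hd (a + b))) = 0 := by
  set S : ℝ → Set (sphere (0 : EuclideanSpace ℝ (Fin d)) 1) :=
    fun θ => {r | ⟪(r : EuclideanSpace ℝ (Fin d)), uvec hd θ⟫ = 0} with hS
  have hsub : Dset (epair hd 0) (uvec hd a) ∩ Dset (uvec hd a) (uvec hd (a + b)) ⊆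
      S 0 ∪ S a ∪ S (a + b) := by
    rintro r ⟨hX, hY⟩
    rw [show Dset (epair hd 0) (uvec hd a) = Dset (uvec hd 0) (uvec hd a) by
      rw [uvec_zero hd]] at hX
    simp only [Dset, Set.mem_setOf_eq] at hX hY
    by_contra hout
    simp only [Set.mem_union, hS, Set.mem_setOf_eq, not_or] at hout
    obtain ⟨⟨h0, hA⟩, hAB⟩ := hout
    obtain ⟨x, hx⟩ : ∃ x, ⟪(r : EuclideanSpace ℝ (Fin d)), epair hd 0⟫ = x := ⟨_, rfl⟩
    obtain ⟨y, hy⟩ : ∃ y, ⟪(r : EuclideanSpace ℝ (Fin d)), epair hd 1⟫ = y := ⟨_, rfl⟩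
    have hg : ∀ θ, ⟪(r : EuclideanSpace ℝ (Fin d)), uvec hd θ⟫
        = Real.cos θ * x + Real.sin θ * y := fun θ => by
      rw [inner_uvec, hx, hy]
    set g : ℝ → ℝ := fun θ => Real.cos θ * x + Real.sin θ * y with hgdef
    have hg' : ∀ θ, ⟪(r : EuclideanSpace ℝ (Fin d)), uvec hd θ⟫ = g θ := hg
    have hgc : Continuous g :=
      (Real.continuous_cos.mul continuous_const).add (Real.continuous_sin.mul continuous_const)
    have h0' : g 0 ≠ 0 := fun h => h0 (by rw [hg' 0, h])
    have hA' : g a ≠ 0 := fun h => hA (by rw [hg' a, h])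
    have hAB' : g (a + b) ≠ 0 := fun h => hAB (by rw [hg' (a + b), h])
    have hX' : g 0 * g a < 0 := by
      apply sign_mul_neg h0' hA'
      rw [← hg' 0, ← hg' a]; exact hX
    have hY' : g a * g (a + b) < 0 := by
      apply sign_mul_neg hA' hAB'
      rw [← hg' a, ← hg' (a + b)]; exact hY
    obtain ⟨θ1, hθ1, hgθ1⟩ := exists_zero_of_sign_change hgc ha hX'
    obtain ⟨θ2, hθ2, hgθ2⟩ := exists_zero_of_sign_change hgc (by linarith) hY'
    have hx0 : x ≠ 0 := by
      intro hx0
      apply h0'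
      show Real.cos 0 * x + Real.sin 0 * y = 0
      rw [hx0]; simp
    have h1 : Real.cos θ1 * x + Real.sin θ1 * y = 0 := hgθ1
    have h2 : Real.cos θ2 * x + Real.sin θ2 * y = 0 := hgθ2
    have hxs : x * Real.sin (θ2 - θ1) = 0 := by
      rw [Real.sin_sub]
      linear_combination Real.sin θ2 * h1 - Real.sin θ1 * h2
    have hsinpos : 0 < Real.sin (θ2 - θ1) := by
      apply Real.sin_pos_of_pos_of_lt_pi
      · have := hθ1.2; have := hθ2.1; linarith
      · have := hθ1.1; have := hθ2.2; linarith
    rcases mul_eq_zero.mp hxs with h | h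
    · exact hx0 h
    · linarith
  apply measure_mono_null hsub
  have hnull : ∀ θ, μ (S θ) = 0 := fun θ => null_H μ hinv (norm_uvec hd θ)
  exact measure_union_null (measure_union_null (hnull 0) (hnull a)) (hnull (a + b))

lemma Dmeas_add (μ : Measure (sphere (0 : EuclideanSpace ℝ (Fin d)) 1))
    [IsProbabilityMeasure μ]
    (hinv : ∀ f : EuclideanSpace ℝ (Fin d) ≃ₗᵢ[ℝ] EuclideanSpace ℝ (Fin d),
      Measure.map
        (fun x : sphere (0 : EuclideanSpace ℝ (Fin d)) 1 =>
          (⟨f x, sph_mem f x⟩ :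
              sphere (0 : EuclideanSpace ℝ (Fin d)) 1)) μ = μ)
    (hd : 2 ≤ d) {a b : ℝ} (ha : 0 ≤ a) (hb : 0 ≤ b) (hab : a + b ≤ Real.pi) :
    μ (Dset (epair hd 0) (uvec hd (a + b)))
      = μ (Dset (epair hd 0) (uvec hd a)) + μ (Dset (uvec hd a) (uvec hd (a + b))) := by
  set X := Dset (epair hd 0) (uvec hd a) with hX
  set Y := Dset (uvec hd a) (uvec hd (a + b)) with hY
  set T := Dset (epair hd 0) (uvec hd (a + b)) with hT
  have hXY : μ (X ∩ Y) = 0 := Dset_inter_null μ hinv hd ha hb hab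
  have logic1 : ∀ p q r' : Prop, ¬(p ↔ r') → ¬(p ↔ q) ∨ ¬(q ↔ r') := by tauto
  have logic2 : ∀ p q r' : Prop, (¬(p ↔ q) ∨ ¬(q ↔ r')) →
      ¬(p ↔ r') ∨ (¬(p ↔ q) ∧ ¬(q ↔ r')) := by tauto
  have hT_sub : T ⊆ X ∪ Y := by
    intro r hr
    simp only [hT, hX, hY, Dset, Set.mem_setOf_eq, Set.mem_union] at hr ⊢
    exact logic1 _ _ _ hr
  have hXY_sub : X ∪ Y ⊆ T ∪ (X ∩ Y) := by
    intro r hr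
    simp only [hT, hX, hY, Dset, Set.mem_setOf_eq, Set.mem_union, Set.mem_inter_iff] at hr ⊢
    exact logic2 _ _ _ hr
  have h1 : μ T ≤ μ (X ∪ Y) := measure_mono hT_sub
  have h2 : μ (X ∪ Y) ≤ μ T := by
    calc μ (X ∪ Y) ≤ μ (T ∪ (X ∩ Y)) := measure_mono hXY_sub
      _ ≤ μ T + μ (X ∩ Y) := measure_union_le _ _
      _ = μ T := by rw [hXY, add_zero]
  have h3 : μ (X ∪ Y) = μ X + μ Y := by
    have hYm : MeasurableSet Y := by rw [hY]; exact Dset_meas _ _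
    have := measure_union_add_inter (μ := μ) X hYm
    rw [hXY, add_zero] at this
    exact this
  rw [le_antisymm h1 h2, h3]


lemma unit_interval_linear (p : ℝ → ℝ)
    (hnonneg : ∀ θ, 0 ≤ p θ)
    (hmono : ∀ s t : ℝ, 0 ≤ s → s ≤ t → t ≤ Real.pi → p s ≤ p t)
    (hfrac : ∀ m n : ℕ, 0 < n → m ≤ n → p ((m : ℝ) * Real.pi / n) = (m : ℝ) / n)
    (ppi : p Real.pi = 1) :
    ∀ θ : ℝ, 0 ≤ θ → θ ≤ Real.pi → p θ = θ / Real.pi := by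
  intro θ h0 hπ
  rcases eq_or_lt_of_le hπ with rfl | hθπ
  · rw [ppi, div_self Real.pi_ne_zero]
  · have key : ∀ n : ℕ, 0 < n → |p θ - θ / Real.pi| ≤ 1 / n := by
      intro n hn
      have hnr : (n : ℝ) ≠ 0 := Nat.cast_ne_zero.mpr hn.ne'
      have hnpos : (0 : ℝ) < n := by positivity
      set m : ℕ := ⌊(n : ℝ) * θ / Real.pi⌋₊ with hm
      have hθπ0 : 0 ≤ (n : ℝ) * θ / Real.pi := by positivity
      have hml : (m : ℝ) ≤ (n : ℝ) * θ / Real.pi := Nat.floor_le hθπ0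
      have hmu : (n : ℝ) * θ / Real.pi < (m : ℝ) + 1 := Nat.lt_floor_add_one _
      have hmn : m < n := by
        rw [hm]
        apply Nat.floor_lt hθπ0 |>.mpr
        rw [div_lt_iff₀ Real.pi_pos]
        nlinarith
      have hml' : (m : ℝ) * Real.pi ≤ (n : ℝ) * θ := (le_div_iff₀ Real.pi_pos).mp hml
      have hmu' : (n : ℝ) * θ < ((m : ℝ) + 1) * Real.pi := (div_lt_iff₀ Real.pi_pos).mp hmu
      have hlow : (m : ℝ) * Real.pi / n ≤ θ := by
        rw [div_le_iff₀ hnpos]; nlinarith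
      have hhigh : θ ≤ ((m : ℝ) + 1) * Real.pi / n := by
        rw [le_div_iff₀ hnpos]; nlinarith
      have hhigh' : ((m : ℝ) + 1) * Real.pi / n ≤ Real.pi := by
        rw [div_le_iff₀ hnpos]
        have : (m : ℝ) + 1 ≤ n := by exact_mod_cast hmn
        nlinarith [Real.pi_pos]
      have hp1 : (m : ℝ) / n ≤ p θ := by
        rw [← hfrac m n hn hmn.le]
        exact hmono _ _ (by positivity) hlow (by linarith)
      have hp2 : p θ ≤ ((m : ℝ) + 1) / n := by
        have h := hfrac (m + 1) n hn hmn
        push_cast at h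
        rw [← h]
        exact hmono _ _ (by linarith [h0]) hhigh hhigh'
      have ht1 : (m : ℝ) / n ≤ θ / Real.pi := by
        rw [div_le_div_iff₀ hnpos Real.pi_pos]; nlinarith
      have ht2 : θ / Real.pi ≤ ((m : ℝ) + 1) / n := by
        rw [div_le_div_iff₀ Real.pi_pos hnpos]; nlinarith
      have hsplit : ((m : ℝ) + 1) / n = (m : ℝ) / n + 1 / n := by ring
      rw [abs_le]
      constructor
      · linarith
      · linarith
    by_contra hne
    have habs : 0 < |p θ - θ / Real.pi| := abs_pos.mpr (sub_ne_zero.mpr hne)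
    obtain ⟨n, hn⟩ := exists_nat_one_div_lt habs
    have h := key (n + 1) (Nat.succ_pos n)
    push_cast at h hn
    linarith

lemma Dset_prob (μ : Measure (sphere (0 : EuclideanSpace ℝ (Fin d)) 1))
    [IsProbabilityMeasure μ]
    (hinv : ∀ f : EuclideanSpace ℝ (Fin d) ≃ₗᵢ[ℝ] EuclideanSpace ℝ (Fin d),
      Measure.map
        (fun x : sphere (0 : EuclideanSpace ℝ (Fin d)) 1 =>
          (⟨f x, sph_mem f x⟩ :
              sphere (0 : EuclideanSpace ℝ (Fin d)) 1)) μ = μ)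
    (hd : 2 ≤ d) {u w : EuclideanSpace ℝ (Fin d)} (hu : ‖u‖ = 1) (hw : ‖w‖ = 1) :
    (μ (Dset u w)).toReal = Real.arccos ⟪u, w⟫ / Real.pi := by
  set p : ℝ → ℝ := fun θ => (μ (Dset (epair hd 0) (uvec hd θ))).toReal with hp
  suffices hP : ∀ θ, 0 ≤ θ → θ ≤ Real.pi → p θ = θ / Real.pi by
    rw [Dset_canonical μ hinv hd hu hw]
    exact hP _ (Real.arccos_nonneg _) (Real.arccos_le_pi _)
  have hconv : ∀ a b : ℝ, 0 ≤ a → 0 ≤ b → a + b ≤ Real.pi →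
      μ (Dset (uvec hd a) (uvec hd (a + b))) = μ (Dset (epair hd 0) (uvec hd b)) := by
    intro a b ha hb hab
    rw [Dset_canonical μ hinv hd (norm_uvec hd a) (norm_uvec hd (a + b))]
    rw [inner_uvec_uvec]
    have h1 : a + b - a = b := by ring
    rw [h1, Real.arccos_cos hb (by linarith [Real.pi_pos])]
  have hpadd : ∀ a b : ℝ, 0 ≤ a → 0 ≤ b → a + b ≤ Real.pi → p (a + b) = p a + p b := by
    intro a b ha hb hab
    have h := Dmeas_add μ hinv hd ha hb hab
    rw [hconv a b ha hb hab] at h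
    simp only [hp]
    rw [h, ENNReal.toReal_add (measure_ne_top μ _) (measure_ne_top μ _)]
  have p0 : p 0 = 0 := by
    simp only [hp]
    rw [uvec_zero]
    have hempty : Dset (epair hd 0) (epair hd 0) = ∅ := by ext r; simp [Dset]
    rw [hempty]
    simp
  have ppi : p Real.pi = 1 := by
    simp only [hp]
    have hset : Dset (epair hd 0) (uvec hd Real.pi)
        = {r : sphere (0 : EuclideanSpace ℝ (Fin d)) 1 |
            ⟪(r : EuclideanSpace ℝ (Fin d)), epair hd 0⟫ = 0}ᶜ := by
      rw [uvec_pi]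
      ext r
      simp only [Dset, Set.mem_setOf_eq, Set.mem_compl_iff, inner_neg_right]
      constructor
      · intro h h0
        exact h (by rw [h0]; simp)
      · intro h0 hiff
        rcases lt_or_gt_of_ne h0 with h1 | h1
        · have := hiff.mpr (by linarith); linarith
        · have := hiff.mp (by linarith); linarith
    rw [hset, measure_compl
      (isClosed_eq (continuous_subtype_val.inner continuous_const) continuous_const).measurableSet
      (measure_ne_top μ _), null_H μ hinv (epair_norm hd 0)]
    simp
  have hnonneg : ∀ θ, 0 ≤ p θ := fun θ => ENNReal.toReal_nonneg
  have hmono : ∀ s t : ℝ, 0 ≤ s → s ≤ t → t ≤ Real.pi → p s ≤ p t := by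
    intro s t hs hst htp
    have h := hpadd s (t - s) hs (by linarith) (by linarith)
    have h2 : s + (t - s) = t := by ring
    rw [h2] at h
    rw [h]
    linarith [hnonneg (t - s)]
  have hmul : ∀ (m : ℕ) (t : ℝ), 0 ≤ t → (m : ℝ) * t ≤ Real.pi → p ((m : ℝ) * t) = m * p t := by
    intro m
    induction m with
    | zero => intro t ht hmt; simpa using p0
    | succ m IH =>
      intro t ht hmt
      have hmt' : (m : ℝ) * t ≤ Real.pi := by push_cast at hmt; nlinarith
      have hstep : ((m + 1 : ℕ) : ℝ) * t = (m : ℝ) * t + t := by push_cast; ring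
      rw [hstep, hpadd _ t (by positivity) ht (by push_cast at hmt ⊢; nlinarith),
        IH t ht hmt']
      push_cast; ring
  have hfrac : ∀ m n : ℕ, 0 < n → m ≤ n → p ((m : ℝ) * Real.pi / n) = (m : ℝ) / n := by
    intro m n hn hmn
    have hnr : (n : ℝ) ≠ 0 := Nat.cast_ne_zero.mpr hn.ne'
    have hnpos : (0 : ℝ) < n := by positivity
    have hcancel : (n : ℝ) * (Real.pi / n) = Real.pi := by field_simp
    have hπn : p (Real.pi / n) = 1 / n := by
      have h := hmul n (Real.pi / n) (by positivity) (by rw [hcancel])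
      rw [hcancel, ppi] at h
      field_simp at h ⊢
      linarith
    have hmπ : (m : ℝ) * (Real.pi / n) ≤ Real.pi := by
      have : (m : ℝ) * (Real.pi / n) ≤ (n : ℝ) * (Real.pi / n) := by
        have hmn' : (m : ℝ) ≤ n := by exact_mod_cast hmn
        have : 0 < Real.pi / n := by positivity
        nlinarith
      rw [hcancel] at this
      exact this
    have h := hmul m (Real.pi / n) (by positivity) hmπ
    rw [hπn] at h
    have harg : (m : ℝ) * Real.pi / n = (m : ℝ) * (Real.pi / n) := by ring
    rw [harg, h]
    field_simp
  exact fun θ => unit_interval_linear p hnonneg hmono hfrac ppi θ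

theorem gw_expected_cut_value (d : ℕ) (hd : 2 ≤ d)
    (μ : Measure (sphere (0 : EuclideanSpace ℝ (Fin d)) 1))
    [IsProbabilityMeasure μ]
    (hinv : ∀ f : EuclideanSpace ℝ (Fin d) ≃ₗᵢ[ℝ] EuclideanSpace ℝ (Fin d),
      Measure.map
        (fun x : sphere (0 : EuclideanSpace ℝ (Fin d)) 1 =>
          (⟨f x, by
            simp [mem_sphere_zero_iff_norm, f.norm_map, x.2]⟩ :
              sphere (0 : EuclideanSpace ℝ (Fin d)) 1)) μ = μ)
    (n : ℕ) (ω : Fin n → Fin n → ℝ) (hsymm : ∀ i j, ω i j = ω j i)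
    (v : Fin n → EuclideanSpace ℝ (Fin d)) (hv : ∀ i, ‖v i‖ = 1) :
    ∫ r : sphere (0 : EuclideanSpace ℝ (Fin d)) 1,
        cutVal n ω (fun i =>
          if 0 ≤ ⟪(r : EuclideanSpace ℝ (Fin d)), v i⟫ then 1 else -1) ∂μ
      = (1 / Real.pi) *
          ∑ i : Fin n, ∑ j : Fin n,
            (if i < j then ω i j * Real.arccos ⟪v i, v j⟫ else 0) := by
  classical
  have hpoint : ∀ r : sphere (0 : EuclideanSpace ℝ (Fin d)) 1,
      cutVal n ω (fun i => if 0 ≤ ⟪(r : EuclideanSpace ℝ (Fin d)), v i⟫ then 1 else -1)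
        = ∑ i : Fin n, ∑ j : Fin n,
            (if i < j then
              ω i j * Set.indicator (Dset (v i) (v j)) (fun _ => (1 : ℝ)) r else 0) := by
    intro r
    rw [cutVal, Finset.mul_sum]
    refine Finset.sum_congr rfl fun i _ => ?_
    rw [Finset.mul_sum]
    refine Finset.sum_congr rfl fun j _ => ?_
    by_cases hij : i < j
    · rw [if_pos hij, if_pos hij]
      by_cases hmem : r ∈ Dset (v i) (v j)
      · rw [Set.indicator_of_mem hmem]
        have hm : ¬ ((0 ≤ ⟪(r : EuclideanSpace ℝ (Fin d)), v i⟫)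
            ↔ (0 ≤ ⟪(r : EuclideanSpace ℝ (Fin d)), v j⟫)) := hmem
        have hprod : (if 0 ≤ ⟪(r : EuclideanSpace ℝ (Fin d)), v i⟫ then (1:ℝ) else -1)
            * (if 0 ≤ ⟪(r : EuclideanSpace ℝ (Fin d)), v j⟫ then (1:ℝ) else -1) = -1 := by
          by_cases h1 : 0 ≤ ⟪(r : EuclideanSpace ℝ (Fin d)), v i⟫ <;>
            by_cases h2 : 0 ≤ ⟪(r : EuclideanSpace ℝ (Fin d)), v j⟫
          · exact absurd (iff_of_true h1 h2) hm
          · rw [if_pos h1, if_neg h2]; ring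
          · rw [if_neg h1, if_pos h2]; ring
          · exact absurd (iff_of_false h1 h2) hm
        rw [hprod]; ring
      · rw [Set.indicator_of_notMem hmem]
        have hm : (0 ≤ ⟪(r : EuclideanSpace ℝ (Fin d)), v i⟫)
            ↔ (0 ≤ ⟪(r : EuclideanSpace ℝ (Fin d)), v j⟫) := not_not.mp hmem
        have hprod : (if 0 ≤ ⟪(r : EuclideanSpace ℝ (Fin d)), v i⟫ then (1:ℝ) else -1)
            * (if 0 ≤ ⟪(r : EuclideanSpace ℝ (Fin d)), v j⟫ then (1:ℝ) else -1) = 1 := by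
          by_cases h1 : 0 ≤ ⟪(r : EuclideanSpace ℝ (Fin d)), v i⟫
          · rw [if_pos h1, if_pos (hm.mp h1)]; ring
          · rw [if_neg h1, if_neg (fun h2 => h1 (hm.mpr h2))]; ring
        rw [hprod]; ring
    · rw [if_neg hij, if_neg hij, mul_zero]
  rw [integral_congr_ae (ae_of_all μ hpoint)]
  have hint : ∀ i j : Fin n,
      Integrable (fun r : sphere (0 : EuclideanSpace ℝ (Fin d)) 1 =>
        if i < j then ω i j * Set.indicator (Dset (v i) (v j)) (fun _ => (1 : ℝ)) r else 0) μ := by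
    intro i j
    by_cases hij : i < j
    · simp only [if_pos hij]
      exact ((integrable_const (1 : ℝ)).indicator (Dset_meas (v i) (v j))).const_mul _
    · simp only [if_neg hij]
      exact integrable_const 0
  rw [integral_finset_sum _ (fun i _ => integrable_finset_sum _ (fun j _ => hint i j))]
  have hival : ∀ i j : Fin n,
      (∫ r, (if i < j then
          ω i j * Set.indicator (Dset (v i) (v j)) (fun _ => (1 : ℝ)) r else 0) ∂μ)
        = if i < j then ω i j * (Real.arccos ⟪v i, v j⟫ / Real.pi) else 0 := by
    intro i j
    by_cases hij : i < j
    · simp only [if_pos hij]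
      rw [MeasureTheory.integral_const_mul _ _,
        MeasureTheory.integral_indicator_const (1 : ℝ) (Dset_meas (v i) (v j)),
        smul_eq_mul, mul_one, measureReal_def, Dset_prob μ hinv hd (hv i) (hv j)]
    · simp only [if_neg hij, integral_zero]
  have step1 : ∀ i : Fin n,
      (∫ r, (∑ j : Fin n, if i < j then
          ω i j * Set.indicator (Dset (v i) (v j)) (fun _ => (1 : ℝ)) r else 0) ∂μ)
        = ∑ j : Fin n, (if i < j then ω i j * (Real.arccos ⟪v i, v j⟫ / Real.pi) else 0) := by
    intro i
    rw [integral_finset_sum _ (fun j _ => hint i j)]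
    exact Finset.sum_congr rfl fun j _ => hival i j
  rw [Finset.sum_congr rfl (fun i _ => step1 i), Finset.mul_sum]
  refine Finset.sum_congr rfl fun i _ => ?_
  rw [Finset.mul_sum]
  refine Finset.sum_congr rfl fun j _ => ?_
  by_cases hij : i < j
  · rw [if_pos hij, if_pos hij]; ring
  · rw [if_neg hij, if_neg hij, mul_zero]
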